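/- Theorem A, part (1), in arithmetic form: let p, q, a, b : Fin 3 → ℤ satisfy p 1 + p 2 + p 3 = q 1 + q 2 + q 3 and a 1 + a 2 + a 3 = b 1 + b 2 + b 3. Assume: (i) N σ ≠ 0 for every permutation σ of {1,2,3} (the torus action is almost free); (ii) the gcd of all 2×2 minors (p i − q j)·(a k − b l) − (p k − q l)·(a i − b j), taken over pairs of index pairs (i,j) ≠ (k,l) with i ≠ j and k ≠ l, equals 1 (the action is effective); (iii) for some i ≠ j the closed segment between Q i and Q j in ℝ² is disjoint from the convex hull of {P 1, P 2, P 3} (the orbifold carries a positively curved Eschenburg metric); (iv) there exists a permutation σ with |N σ| > 1 (the singular set is nonempty). Then there exist an even permutation σ with |N σ| > 1 and an odd permutation τ with |N τ| > 1; i.e. the singular set contains a vertex of each parity. -/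

import Mathlib

/-- The planar point associated to a pair of integer Eschenburg parameters. -/
noncomputable def eschPt (x y : ℤ) : EuclideanSpace ℝ (Fin 2) := WithLp.toLp 2 ![(x : ℝ), (y : ℝ)]

/-- The signed order `N σ` of the isotropy group at the vertex `∗_σ`. -/
def eschN (p q a b : Fin 3 → ℤ) (σ : Equiv.Perm (Fin 3)) : ℤ :=
  (p 0 - q (σ 0)) * (a 1 - b (σ 1)) - (p 1 - q (σ 1)) * (a 0 - b (σ 0))

/-- The gcd of all `2 × 2` minors `(p i − q j)·(a k − b l) − (p k − q l)·(a i − b j)` over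
pairs of index pairs `(i,j) ≠ (k,l)` with `i ≠ j`, `k ≠ l`; the torus action is effective
iff this gcd is `1`. -/
def eschMinorGcd (p q a b : Fin 3 → ℤ) : ℤ :=
  Finset.gcd
    ((Finset.univ : Finset ((Fin 3 × Fin 3) × (Fin 3 × Fin 3))).filter
      fun x => x.1 ≠ x.2 ∧ x.1.1 ≠ x.1.2 ∧ x.2.1 ≠ x.2.2)
    fun x => (p x.1.1 - q x.1.2) * (a x.2.1 - b x.2.2) -
      (p x.2.1 - q x.2.2) * (a x.1.1 - b x.1.2)

/-! ### Auxiliary material -/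

def pc : Equiv.Perm (Fin 3) := Equiv.swap 0 1 * Equiv.swap 1 2
def pc2 : Equiv.Perm (Fin 3) := Equiv.swap 1 2 * Equiv.swap 0 1

lemma oddPairs (τ : Equiv.Perm (Fin 3)) (h : Equiv.Perm.sign τ = -1) :
    (τ 0 = 1 ∧ τ 1 = 0) ∨ (τ 0 = 2 ∧ τ 1 = 1) ∨ (τ 0 = 0 ∧ τ 1 = 2) := by
  revert h; revert τ; decide



/-- Sign helper: positive factor. -/
lemma pos_of_mul_eq {L X R : ℝ} (hL : 0 < L) (h : L * X = R) (hR : 0 < R) : 0 < X := by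
  rcases le_or_gt X 0 with hx | hx
  · nlinarith
  · exact hx

lemma neg_of_mul_eq {L X R : ℝ} (hL : L < 0) (h : L * X = R) (hR : 0 < R) : X < 0 := by
  rcases le_or_gt 0 X with hx | hx
  · nlinarith
  · exact hx

/-- Mixed-sign case of the core lemma: impossible. -/
lemma coreMix (a1 a2 c1 c2 d1 d2 : ℤ) (W1 W2 : ℝ)
    (h0 : 0 < W1 * (a1 : ℝ) + W2 * (a2 : ℝ))
    (h2 : 0 < W1 * (c1 : ℝ) + W2 * (c2 : ℝ))
    (h0' : 0 < W1 * ((a1 : ℝ) - (d1 : ℝ)) + W2 * ((a2 : ℝ) - (d2 : ℝ)))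
    (h2' : 0 < W1 * ((c1 : ℝ) - (d1 : ℝ)) + W2 * ((c2 : ℝ) - (d2 : ℝ)))
    (hE2 : |c1 * (a2 - d2) - c2 * (a1 - d1)| = 1)
    (hc0 : 0 < d1 * a2 - d2 * a1)
    (hc2 : d1 * c2 - d2 * c1 < 0) : False := by
  have hE2' : c1 * (a2 - d2) - c2 * (a1 - d1) = 1 ∨ c1 * (a2 - d2) - c2 * (a1 - d1) = -1 :=
    (abs_eq (by norm_num : (0:ℤ) ≤ 1)).mp hE2
  have hc0R : (0:ℝ) < (d1:ℝ) * a2 - (d2:ℝ) * a1 := by exact_mod_cast hc0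
  have hc2R : ((d1:ℝ) * c2 - (d2:ℝ) * c1) < 0 := by exact_mod_cast hc2
  have P1 : (W1 * (d1:ℝ) + W2 * (d2:ℝ)) * ((c1:ℝ) * a2 - (c2:ℝ) * a1)
      = (W1 * (c1:ℝ) + W2 * (c2:ℝ)) * ((d1:ℝ) * a2 - (d2:ℝ) * a1)
        - (W1 * (a1:ℝ) + W2 * (a2:ℝ)) * ((d1:ℝ) * c2 - (d2:ℝ) * c1) := by ring
  have P2 : (W1 * (d1:ℝ) + W2 * (d2:ℝ)) * (((c1 * (a2 - d2) - c2 * (a1 - d1) : ℤ) : ℝ))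
      = (W1 * (c1:ℝ) + W2 * (c2:ℝ)) * ((d1:ℝ) * a2 - (d2:ℝ) * a1)
        - (W1 * ((a1:ℝ) - (d1:ℝ)) + W2 * ((a2:ℝ) - (d2:ℝ))) * ((d1:ℝ) * c2 - (d2:ℝ) * c1) := by
    push_cast; ring
  have P3 : (W1 * (d1:ℝ) + W2 * (d2:ℝ)) *
        (((c1:ℝ) - (d1:ℝ)) * ((a2:ℝ) - (d2:ℝ)) - ((c2:ℝ) - (d2:ℝ)) * ((a1:ℝ) - (d1:ℝ)))
      = (W1 * ((c1:ℝ) - (d1:ℝ)) + W2 * ((c2:ℝ) - (d2:ℝ))) * ((d1:ℝ) * a2 - (d2:ℝ) * a1)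
        - (W1 * ((a1:ℝ) - (d1:ℝ)) + W2 * ((a2:ℝ) - (d2:ℝ))) * ((d1:ℝ) * c2 - (d2:ℝ) * c1) := by
    ring
  have hR1 : 0 < (W1 * (c1:ℝ) + W2 * (c2:ℝ)) * ((d1:ℝ) * a2 - (d2:ℝ) * a1)
      - (W1 * (a1:ℝ) + W2 * (a2:ℝ)) * ((d1:ℝ) * c2 - (d2:ℝ) * c1) := by
    nlinarith [mul_pos h2 hc0R, mul_pos h0 (neg_pos.mpr hc2R)]
  have hR2 : 0 < (W1 * (c1:ℝ) + W2 * (c2:ℝ)) * ((d1:ℝ) * a2 - (d2:ℝ) * a1)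
      - (W1 * ((a1:ℝ) - (d1:ℝ)) + W2 * ((a2:ℝ) - (d2:ℝ))) * ((d1:ℝ) * c2 - (d2:ℝ) * c1) := by
    nlinarith [mul_pos h2 hc0R, mul_pos h0' (neg_pos.mpr hc2R)]
  have hR3 : 0 < (W1 * ((c1:ℝ) - (d1:ℝ)) + W2 * ((c2:ℝ) - (d2:ℝ))) * ((d1:ℝ) * a2 - (d2:ℝ) * a1)
      - (W1 * ((a1:ℝ) - (d1:ℝ)) + W2 * ((a2:ℝ) - (d2:ℝ))) * ((d1:ℝ) * c2 - (d2:ℝ) * c1) := by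
    nlinarith [mul_pos h2' hc0R, mul_pos h0' (neg_pos.mpr hc2R)]
  rcases lt_trichotomy (W1 * (d1:ℝ) + W2 * (d2:ℝ)) 0 with hL | hL | hL
  · -- L < 0 : n2 < 0 and E2 = -1, contradiction
    have hn2R : ((c1:ℝ) * a2 - (c2:ℝ) * a1) < 0 := neg_of_mul_eq hL P1 hR1
    have hn2 : c1 * a2 - c2 * a1 < 0 := by exact_mod_cast hn2R
    have hE2R : (((c1 * (a2 - d2) - c2 * (a1 - d1) : ℤ) : ℝ)) < 0 := neg_of_mul_eq hL P2 hR2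
    have hE2neg : c1 * (a2 - d2) - c2 * (a1 - d1) < 0 := by exact_mod_cast hE2R
    have hval : c1 * (a2 - d2) - c2 * (a1 - d1) = -1 := by rcases hE2' with h | h <;> omega
    have hid : c1 * a2 - c2 * a1 = (c1 * (a2 - d2) - c2 * (a1 - d1)) - (d1 * c2 - d2 * c1) := by
      ring
    rw [hval] at hid
    omega
  · rw [hL, zero_mul] at P1; linarith
  · -- L > 0 : E2 = 1 and n2' ≥ 1 but n2' = E2 - c0 ≤ 0
    have hE2R : (0:ℝ) < (((c1 * (a2 - d2) - c2 * (a1 - d1) : ℤ) : ℝ)) := pos_of_mul_eq hL P2 hR2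
    have hE2pos : 0 < c1 * (a2 - d2) - c2 * (a1 - d1) := by exact_mod_cast hE2R
    have hval : c1 * (a2 - d2) - c2 * (a1 - d1) = 1 := by rcases hE2' with h | h <;> omega
    have hn2'R : (0:ℝ) < ((c1:ℝ) - (d1:ℝ)) * ((a2:ℝ) - (d2:ℝ)) - ((c2:ℝ) - (d2:ℝ)) * ((a1:ℝ) - (d1:ℝ)) :=
      pos_of_mul_eq hL P3 hR3
    have hn2' : 0 < (c1 - d1) * (a2 - d2) - (c2 - d2) * (a1 - d1) := by exact_mod_cast hn2'R
    have hid : (c1 - d1) * (a2 - d2) - (c2 - d2) * (a1 - d1)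
        = (c1 * (a2 - d2) - c2 * (a1 - d1)) - (d1 * a2 - d2 * a1) := by ring
    rw [hval] at hid
    omega

lemma coreZM (a1 a2 b1 b2 c1 c2 d1 d2 : ℤ) (W1 W2 : ℝ)
    (h0 : 0 < W1 * (a1 : ℝ) + W2 * (a2 : ℝ))
    (h0' : 0 < W1 * ((a1 : ℝ) - (d1 : ℝ)) + W2 * ((a2 : ℝ) - (d2 : ℝ)))
    (hE0 : |a1 * (b2 - d2) - a2 * (b1 - d1)| = 1)
    (hE2 : |c1 * (a2 - d2) - c2 * (a1 - d1)| = 1)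
    (hc0 : d1 * a2 - d2 * a1 = 0) : d1 = 0 ∧ d2 = 0 := by
  obtain ⟨u, v, huv⟩ : ∃ u v : ℤ, u * a1 + v * a2 = 1 := by
    rcases (abs_eq (by norm_num : (0:ℤ) ≤ 1)).mp hE0 with h | h
    · exact ⟨b2 - d2, -(b1 - d1), by linear_combination h⟩
    · exact ⟨-(b2 - d2), b1 - d1, by linear_combination -h⟩
  set t : ℤ := u * (a1 - d1) + v * (a2 - d2) with ht
  have ht1 : a1 - d1 = t * a1 := by
    rw [ht]; linear_combination (d1 - a1) * huv - v * hc0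
  have ht2 : a2 - d2 = t * a2 := by
    rw [ht]; linear_combination (d2 - a2) * huv + u * hc0
  have hE2t : c1 * (a2 - d2) - c2 * (a1 - d1) = t * (c1 * a2 - c2 * a1) := by
    linear_combination c1 * ht2 - c2 * ht1
  have htunit : t = 1 ∨ t = -1 := by
    rcases (abs_eq (by norm_num : (0:ℤ) ≤ 1)).mp hE2 with h | h
    · rw [hE2t] at h
      exact Int.isUnit_iff.mp (IsUnit.of_mul_eq_one _ h)
    · rw [hE2t] at h
      have h' : t * (-(c1 * a2 - c2 * a1)) = 1 := by linear_combination -h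
      exact Int.isUnit_iff.mp (IsUnit.of_mul_eq_one _ h')
  rcases htunit with h1t | h1t
  · rw [h1t, one_mul] at ht1 ht2
    omega
  · exfalso
    rw [h1t] at ht1 ht2
    have r1 := congrArg (fun z : ℤ => (z : ℝ)) ht1
    have r2 := congrArg (fun z : ℤ => (z : ℝ)) ht2
    push_cast at r1 r2
    rw [r1, r2] at h0'
    linarith

lemma corePosAbs (e0 e1 e2 g0 g1 g2 : ℤ)
    (master : (e0 - g0) * g2 + (e1 - g1) * g0 + (e2 - g2) * g1 = 0)
    (hb0 : |e0| = 1) (hb1 : |e1| = 1) (hb2 : |e2| = 1)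
    (hg0 : 0 < g0) (hg1 : 0 < g1) (hg2 : 0 < g2) :
    e0 = 1 ∧ e1 = 1 ∧ e2 = 1 ∧ g0 = 1 ∧ g1 = 1 ∧ g2 = 1 := by
  have hB0 := abs_le.mp hb0.le
  have hB1 := abs_le.mp hb1.le
  have hB2 := abs_le.mp hb2.le
  have A1 : 0 ≤ (1 - e0) * g2 := mul_nonneg (by linarith [hB0.2]) hg2.le
  have A2 : 0 ≤ (1 - e1) * g0 := mul_nonneg (by linarith [hB1.2]) hg0.le
  have A3 : 0 ≤ (1 - e2) * g1 := mul_nonneg (by linarith [hB2.2]) hg1.le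
  have B1 : 0 ≤ (g0 - 1) * (g1 - 1) := mul_nonneg (by omega) (by omega)
  have B2 : 0 ≤ (g1 - 1) * (g2 - 1) := mul_nonneg (by omega) (by omega)
  have B3 : 0 ≤ (g2 - 1) * (g0 - 1) := mul_nonneg (by omega) (by omega)
  have h3 : g0 + g1 + g2 ≤ 3 := by nlinarith [master, A1, A2, A3, B1, B2, B3]
  have hgg0 : g0 = 1 := by omega
  have hgg1 : g1 = 1 := by omega
  have hgg2 : g2 = 1 := by omega
  rw [hgg0, hgg1, hgg2] at master
  ring_nf at master
  refine ⟨by omega, by omega, by omega, hgg0, hgg1, hgg2⟩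


lemma core (a1 a2 b1 b2 c1 c2 d1 d2 : ℤ) (W1 W2 : ℝ)
    (h0 : 0 < W1 * (a1 : ℝ) + W2 * (a2 : ℝ))
    (h1 : 0 < W1 * (b1 : ℝ) + W2 * (b2 : ℝ))
    (h2 : 0 < W1 * (c1 : ℝ) + W2 * (c2 : ℝ))
    (h0' : 0 < W1 * ((a1 : ℝ) - (d1 : ℝ)) + W2 * ((a2 : ℝ) - (d2 : ℝ)))
    (h1' : 0 < W1 * ((b1 : ℝ) - (d1 : ℝ)) + W2 * ((b2 : ℝ) - (d2 : ℝ)))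
    (h2' : 0 < W1 * ((c1 : ℝ) - (d1 : ℝ)) + W2 * ((c2 : ℝ) - (d2 : ℝ)))
    (hE0 : |a1 * (b2 - d2) - a2 * (b1 - d1)| = 1)
    (hE1 : |b1 * (c2 - d2) - b2 * (c1 - d1)| = 1)
    (hE2 : |c1 * (a2 - d2) - c2 * (a1 - d1)| = 1) :
    |(a1 - d1) * b2 - (a2 - d2) * b1| ≤ 1 ∧ |(b1 - d1) * c2 - (b2 - d2) * c1| ≤ 1 ∧
      |(c1 - d1) * a2 - (c2 - d2) * a1| ≤ 1 := by
  by_cases hz0 : d1 * a2 - d2 * a1 = 0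
  · obtain ⟨hd1, hd2⟩ := coreZM a1 a2 b1 b2 c1 c2 d1 d2 W1 W2 h0 h0' hE0 hE2 hz0
    subst hd1; subst hd2
    simp only [sub_zero] at hE0 hE1 hE2 ⊢
    exact ⟨le_of_eq hE0, le_of_eq hE1, le_of_eq hE2⟩
  by_cases hz1 : d1 * b2 - d2 * b1 = 0
  · obtain ⟨hd1, hd2⟩ := coreZM b1 b2 c1 c2 a1 a2 d1 d2 W1 W2 h1 h1' hE1 hE0 hz1
    subst hd1; subst hd2
    simp only [sub_zero] at hE0 hE1 hE2 ⊢
    exact ⟨le_of_eq hE0, le_of_eq hE1, le_of_eq hE2⟩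
  by_cases hz2 : d1 * c2 - d2 * c1 = 0
  · obtain ⟨hd1, hd2⟩ := coreZM c1 c2 a1 a2 b1 b2 d1 d2 W1 W2 h2 h2' hE2 hE1 hz2
    subst hd1; subst hd2
    simp only [sub_zero] at hE0 hE1 hE2 ⊢
    exact ⟨le_of_eq hE0, le_of_eq hE1, le_of_eq hE2⟩
  rcases lt_or_gt_of_ne hz0 with hs0 | hs0 <;>
    rcases lt_or_gt_of_ne hz1 with hs1 | hs1 <;>
      rcases lt_or_gt_of_ne hz2 with hs2 | hs2
  · -- (-,-,-) : all negative, use corePosAbs on negated data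
    have hb0 : |(-(a1 * (b2 - d2) - a2 * (b1 - d1)))| = 1 := by rw [abs_neg]; exact hE0
    have hb1 : |(-(b1 * (c2 - d2) - b2 * (c1 - d1)))| = 1 := by rw [abs_neg]; exact hE1
    have hb2 : |(-(c1 * (a2 - d2) - c2 * (a1 - d1)))| = 1 := by rw [abs_neg]; exact hE2
    obtain ⟨he0, he1, he2, hg0, hg1, hg2⟩ := corePosAbs
      (-(a1 * (b2 - d2) - a2 * (b1 - d1))) (-(b1 * (c2 - d2) - b2 * (c1 - d1)))
      (-(c1 * (a2 - d2) - c2 * (a1 - d1)))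
      (-(d1 * a2 - d2 * a1)) (-(d1 * b2 - d2 * b1)) (-(d1 * c2 - d2 * c1))
      (by ring) hb0 hb1 hb2 (by omega) (by omega) (by omega)
    refine ⟨?_, ?_, ?_⟩
    · rw [show (a1 - d1) * b2 - (a2 - d2) * b1
        = -(-(a1 * (b2 - d2) - a2 * (b1 - d1))) + (-(d1 * a2 - d2 * a1)) + (-(d1 * b2 - d2 * b1))
        from by ring, he0, hg0, hg1]
      norm_num
    · rw [show (b1 - d1) * c2 - (b2 - d2) * c1
        = -(-(b1 * (c2 - d2) - b2 * (c1 - d1))) + (-(d1 * b2 - d2 * b1)) + (-(d1 * c2 - d2 * c1))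
        from by ring, he1, hg1, hg2]
      norm_num
    · rw [show (c1 - d1) * a2 - (c2 - d2) * a1
        = -(-(c1 * (a2 - d2) - c2 * (a1 - d1))) + (-(d1 * c2 - d2 * c1)) + (-(d1 * a2 - d2 * a1))
        from by ring, he2, hg2, hg0]
      norm_num
  · exact absurd (coreMix c1 c2 b1 b2 d1 d2 W1 W2 h2 h1 h2' h1' hE1 hs2 hs1) not_false
  · exact absurd (coreMix b1 b2 a1 a2 d1 d2 W1 W2 h1 h0 h1' h0' hE0 hs1 hs0) not_false
  · exact absurd (coreMix b1 b2 a1 a2 d1 d2 W1 W2 h1 h0 h1' h0' hE0 hs1 hs0) not_false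
  · exact absurd (coreMix a1 a2 c1 c2 d1 d2 W1 W2 h0 h2 h0' h2' hE2 hs0 hs2) not_false
  · exact absurd (coreMix c1 c2 b1 b2 d1 d2 W1 W2 h2 h1 h2' h1' hE1 hs2 hs1) not_false
  · exact absurd (coreMix a1 a2 c1 c2 d1 d2 W1 W2 h0 h2 h0' h2' hE2 hs0 hs2) not_false
  · -- (+,+,+)
    obtain ⟨he0, he1, he2, hg0, hg1, hg2⟩ := corePosAbs
      (a1 * (b2 - d2) - a2 * (b1 - d1)) (b1 * (c2 - d2) - b2 * (c1 - d1))
      (c1 * (a2 - d2) - c2 * (a1 - d1))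
      (d1 * a2 - d2 * a1) (d1 * b2 - d2 * b1) (d1 * c2 - d2 * c1)
      (by ring) hE0 hE1 hE2 hs0 hs1 hs2
    refine ⟨?_, ?_, ?_⟩
    · rw [show (a1 - d1) * b2 - (a2 - d2) * b1
        = (a1 * (b2 - d2) - a2 * (b1 - d1)) - (d1 * a2 - d2 * a1) - (d1 * b2 - d2 * b1)
        from by ring, he0, hg0, hg1]
      norm_num
    · rw [show (b1 - d1) * c2 - (b2 - d2) * c1
        = (b1 * (c2 - d2) - b2 * (c1 - d1)) - (d1 * b2 - d2 * b1) - (d1 * c2 - d2 * c1)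
        from by ring, he1, hg1, hg2]
      norm_num
    · rw [show (c1 - d1) * a2 - (c2 - d2) * a1
        = (c1 * (a2 - d2) - c2 * (a1 - d1)) - (d1 * c2 - d2 * c1) - (d1 * a2 - d2 * a1)
        from by ring, he2, hg2, hg0]
      norm_num

lemma branch01 (p q a b : Fin 3 → ℤ)
    (hpq : p 0 + p 1 + p 2 = q 0 + q 1 + q 2)
    (hab : a 0 + a 1 + a 2 = b 0 + b 1 + b 2)
    (W1 W2 : ℝ)
    (HPI : ∀ r : Fin 3, 0 < W1 * ((p r : ℝ) - (q 0 : ℝ)) + W2 * ((a r : ℝ) - (b 0 : ℝ)))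
    (HPJ : ∀ r : Fin 3, 0 < W1 * ((p r : ℝ) - (q 1 : ℝ)) + W2 * ((a r : ℝ) - (b 1 : ℝ)))
    (h1 : ∀ σ : Equiv.Perm (Fin 3), Equiv.Perm.sign σ = 1 → |eschN p q a b σ| = 1) :
    ∀ τ : Equiv.Perm (Fin 3), Equiv.Perm.sign τ = -1 → |eschN p q a b τ| ≤ 1 := by
  have hpc0 : pc 0 = 1 := by decide
  have hpc1 : pc 1 = 2 := by decide
  have hpc20 : pc2 0 = 2 := by decide
  have hpc21 : pc2 1 = 0 := by decide
  have hE0 : |(p 0 - q 0) * ((a 1 - b 0) - (b 1 - b 0)) - (a 0 - b 0) * ((p 1 - q 0) - (q 1 - q 0))| = 1 := by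
    have h := h1 (1 : Equiv.Perm (Fin 3)) (by decide)
    rw [show eschN p q a b (1 : Equiv.Perm (Fin 3)) = (p 0 - q 0) * ((a 1 - b 0) - (b 1 - b 0)) - (a 0 - b 0) * ((p 1 - q 0) - (q 1 - q 0)) from by
      simp only [eschN, Equiv.Perm.coe_one, id_eq]
      ring] at h
    exact h
  have hE1 : |(p 1 - q 0) * ((a 2 - b 0) - (b 1 - b 0)) - (a 1 - b 0) * ((p 2 - q 0) - (q 1 - q 0))| = 1 := by
    have h := h1 pc2 (by decide)
    rw [show eschN p q a b pc2 = (p 1 - q 0) * ((a 2 - b 0) - (b 1 - b 0)) - (a 1 - b 0) * ((p 2 - q 0) - (q 1 - q 0)) from by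
      simp only [eschN, hpc20, hpc21]
      linear_combination (-b 0 + a 1) * hpq + (q 0 - p 1) * hab] at h
    exact h
  have hE2 : |(p 2 - q 0) * ((a 0 - b 0) - (b 1 - b 0)) - (a 2 - b 0) * ((p 0 - q 0) - (q 1 - q 0))| = 1 := by
    have h := h1 pc (by decide)
    rw [show eschN p q a b pc = (p 2 - q 0) * ((a 0 - b 0) - (b 1 - b 0)) - (a 2 - b 0) * ((p 0 - q 0) - (q 1 - q 0)) from by
      simp only [eschN, hpc0, hpc1]
      linear_combination (b 1 - a 0) * hpq + (-q 1 + p 0) * hab] at h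
    exact h
  obtain ⟨hO0, hO1, hO2⟩ := core (p 0 - q 0) (a 0 - b 0) (p 1 - q 0) (a 1 - b 0) (p 2 - q 0) (a 2 - b 0) (q 1 - q 0) (b 1 - b 0) W1 W2
    (by have h := HPI 0; push_cast; linarith) (by have h := HPI 1; push_cast; linarith) (by have h := HPI 2; push_cast; linarith)
    (by have h := HPJ 0; push_cast; linarith) (by have h := HPJ 1; push_cast; linarith) (by have h := HPJ 2; push_cast; linarith)
    hE0 hE1 hE2
  intro τ hτ
  rcases oddPairs τ hτ with ⟨ht0, ht1⟩ | ⟨ht0, ht1⟩ | ⟨ht0, ht1⟩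
  · rw [show eschN p q a b τ = ((p 0 - q 0) - (q 1 - q 0)) * (a 1 - b 0) - ((a 0 - b 0) - (b 1 - b 0)) * (p 1 - q 0) from by
      simp only [eschN, ht0, ht1]
      ring]
    exact hO0
  · rw [show eschN p q a b τ = ((p 1 - q 0) - (q 1 - q 0)) * (a 2 - b 0) - ((a 1 - b 0) - (b 1 - b 0)) * (p 2 - q 0) from by
      simp only [eschN, ht0, ht1]
      linear_combination (-b 1 + a 1) * hpq + (q 1 - p 1) * hab]
    exact hO1
  · rw [show eschN p q a b τ = ((p 2 - q 0) - (q 1 - q 0)) * (a 0 - b 0) - ((a 2 - b 0) - (b 1 - b 0)) * (p 0 - q 0) from by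
      simp only [eschN, ht0, ht1]
      linear_combination (b 0 - a 0) * hpq + (-q 0 + p 0) * hab]
    exact hO2

lemma branch12 (p q a b : Fin 3 → ℤ)
    (hpq : p 0 + p 1 + p 2 = q 0 + q 1 + q 2)
    (hab : a 0 + a 1 + a 2 = b 0 + b 1 + b 2)
    (W1 W2 : ℝ)
    (HPI : ∀ r : Fin 3, 0 < W1 * ((p r : ℝ) - (q 1 : ℝ)) + W2 * ((a r : ℝ) - (b 1 : ℝ)))
    (HPJ : ∀ r : Fin 3, 0 < W1 * ((p r : ℝ) - (q 2 : ℝ)) + W2 * ((a r : ℝ) - (b 2 : ℝ)))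
    (h1 : ∀ σ : Equiv.Perm (Fin 3), Equiv.Perm.sign σ = 1 → |eschN p q a b σ| = 1) :
    ∀ τ : Equiv.Perm (Fin 3), Equiv.Perm.sign τ = -1 → |eschN p q a b τ| ≤ 1 := by
  have hpc0 : pc 0 = 1 := by decide
  have hpc1 : pc 1 = 2 := by decide
  have hpc20 : pc2 0 = 2 := by decide
  have hpc21 : pc2 1 = 0 := by decide
  have hE0 : |(p 0 - q 1) * ((a 1 - b 1) - (b 2 - b 1)) - (a 0 - b 1) * ((p 1 - q 1) - (q 2 - q 1))| = 1 := by
    have h := h1 pc (by decide)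
    rw [show eschN p q a b pc = (p 0 - q 1) * ((a 1 - b 1) - (b 2 - b 1)) - (a 0 - b 1) * ((p 1 - q 1) - (q 2 - q 1)) from by
      simp only [eschN, hpc0, hpc1]
      ring] at h
    exact h
  have hE1 : |(p 1 - q 1) * ((a 2 - b 1) - (b 2 - b 1)) - (a 1 - b 1) * ((p 2 - q 1) - (q 2 - q 1))| = 1 := by
    have h := h1 (1 : Equiv.Perm (Fin 3)) (by decide)
    rw [show eschN p q a b (1 : Equiv.Perm (Fin 3)) = (p 1 - q 1) * ((a 2 - b 1) - (b 2 - b 1)) - (a 1 - b 1) * ((p 2 - q 1) - (q 2 - q 1)) from by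
      simp only [eschN, Equiv.Perm.coe_one, id_eq]
      linear_combination (-b 1 + a 1) * hpq + (q 1 - p 1) * hab] at h
    exact h
  have hE2 : |(p 2 - q 1) * ((a 0 - b 1) - (b 2 - b 1)) - (a 2 - b 1) * ((p 0 - q 1) - (q 2 - q 1))| = 1 := by
    have h := h1 pc2 (by decide)
    rw [show eschN p q a b pc2 = (p 2 - q 1) * ((a 0 - b 1) - (b 2 - b 1)) - (a 2 - b 1) * ((p 0 - q 1) - (q 2 - q 1)) from by
      simp only [eschN, hpc20, hpc21]
      linear_combination (b 2 - a 0) * hpq + (-q 2 + p 0) * hab] at h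
    exact h
  obtain ⟨hO0, hO1, hO2⟩ := core (p 0 - q 1) (a 0 - b 1) (p 1 - q 1) (a 1 - b 1) (p 2 - q 1) (a 2 - b 1) (q 2 - q 1) (b 2 - b 1) W1 W2
    (by have h := HPI 0; push_cast; linarith) (by have h := HPI 1; push_cast; linarith) (by have h := HPI 2; push_cast; linarith)
    (by have h := HPJ 0; push_cast; linarith) (by have h := HPJ 1; push_cast; linarith) (by have h := HPJ 2; push_cast; linarith)
    hE0 hE1 hE2
  intro τ hτ
  rcases oddPairs τ hτ with ⟨ht0, ht1⟩ | ⟨ht0, ht1⟩ | ⟨ht0, ht1⟩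
  · rw [show eschN p q a b τ = ((p 2 - q 1) - (q 2 - q 1)) * (a 0 - b 1) - ((a 2 - b 1) - (b 2 - b 1)) * (p 0 - q 1) from by
      simp only [eschN, ht0, ht1]
      linear_combination (b 1 - a 0) * hpq + (-q 1 + p 0) * hab]
    exact hO2
  · rw [show eschN p q a b τ = ((p 0 - q 1) - (q 2 - q 1)) * (a 1 - b 1) - ((a 0 - b 1) - (b 2 - b 1)) * (p 1 - q 1) from by
      simp only [eschN, ht0, ht1]
      ring]
    exact hO0
  · rw [show eschN p q a b τ = ((p 1 - q 1) - (q 2 - q 1)) * (a 2 - b 1) - ((a 1 - b 1) - (b 2 - b 1)) * (p 2 - q 1) from by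
      simp only [eschN, ht0, ht1]
      linear_combination (-b 2 + a 1) * hpq + (q 2 - p 1) * hab]
    exact hO1

lemma branch20 (p q a b : Fin 3 → ℤ)
    (hpq : p 0 + p 1 + p 2 = q 0 + q 1 + q 2)
    (hab : a 0 + a 1 + a 2 = b 0 + b 1 + b 2)
    (W1 W2 : ℝ)
    (HPI : ∀ r : Fin 3, 0 < W1 * ((p r : ℝ) - (q 2 : ℝ)) + W2 * ((a r : ℝ) - (b 2 : ℝ)))
    (HPJ : ∀ r : Fin 3, 0 < W1 * ((p r : ℝ) - (q 0 : ℝ)) + W2 * ((a r : ℝ) - (b 0 : ℝ)))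
    (h1 : ∀ σ : Equiv.Perm (Fin 3), Equiv.Perm.sign σ = 1 → |eschN p q a b σ| = 1) :
    ∀ τ : Equiv.Perm (Fin 3), Equiv.Perm.sign τ = -1 → |eschN p q a b τ| ≤ 1 := by
  have hpc0 : pc 0 = 1 := by decide
  have hpc1 : pc 1 = 2 := by decide
  have hpc20 : pc2 0 = 2 := by decide
  have hpc21 : pc2 1 = 0 := by decide
  have hE0 : |(p 0 - q 2) * ((a 1 - b 2) - (b 0 - b 2)) - (a 0 - b 2) * ((p 1 - q 2) - (q 0 - q 2))| = 1 := by
    have h := h1 pc2 (by decide)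
    rw [show eschN p q a b pc2 = (p 0 - q 2) * ((a 1 - b 2) - (b 0 - b 2)) - (a 0 - b 2) * ((p 1 - q 2) - (q 0 - q 2)) from by
      simp only [eschN, hpc20, hpc21]
      ring] at h
    exact h
  have hE1 : |(p 1 - q 2) * ((a 2 - b 2) - (b 0 - b 2)) - (a 1 - b 2) * ((p 2 - q 2) - (q 0 - q 2))| = 1 := by
    have h := h1 pc (by decide)
    rw [show eschN p q a b pc = (p 1 - q 2) * ((a 2 - b 2) - (b 0 - b 2)) - (a 1 - b 2) * ((p 2 - q 2) - (q 0 - q 2)) from by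
      simp only [eschN, hpc0, hpc1]
      linear_combination (-b 2 + a 1) * hpq + (q 2 - p 1) * hab] at h
    exact h
  have hE2 : |(p 2 - q 2) * ((a 0 - b 2) - (b 0 - b 2)) - (a 2 - b 2) * ((p 0 - q 2) - (q 0 - q 2))| = 1 := by
    have h := h1 (1 : Equiv.Perm (Fin 3)) (by decide)
    rw [show eschN p q a b (1 : Equiv.Perm (Fin 3)) = (p 2 - q 2) * ((a 0 - b 2) - (b 0 - b 2)) - (a 2 - b 2) * ((p 0 - q 2) - (q 0 - q 2)) from by
      simp only [eschN, Equiv.Perm.coe_one, id_eq]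
      linear_combination (b 0 - a 0) * hpq + (-q 0 + p 0) * hab] at h
    exact h
  obtain ⟨hO0, hO1, hO2⟩ := core (p 0 - q 2) (a 0 - b 2) (p 1 - q 2) (a 1 - b 2) (p 2 - q 2) (a 2 - b 2) (q 0 - q 2) (b 0 - b 2) W1 W2
    (by have h := HPI 0; push_cast; linarith) (by have h := HPI 1; push_cast; linarith) (by have h := HPI 2; push_cast; linarith)
    (by have h := HPJ 0; push_cast; linarith) (by have h := HPJ 1; push_cast; linarith) (by have h := HPJ 2; push_cast; linarith)
    hE0 hE1 hE2
  intro τ hτ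
  rcases oddPairs τ hτ with ⟨ht0, ht1⟩ | ⟨ht0, ht1⟩ | ⟨ht0, ht1⟩
  · rw [show eschN p q a b τ = ((p 1 - q 2) - (q 0 - q 2)) * (a 2 - b 2) - ((a 1 - b 2) - (b 0 - b 2)) * (p 2 - q 2) from by
      simp only [eschN, ht0, ht1]
      linear_combination (-b 0 + a 1) * hpq + (q 0 - p 1) * hab]
    exact hO1
  · rw [show eschN p q a b τ = ((p 2 - q 2) - (q 0 - q 2)) * (a 0 - b 2) - ((a 2 - b 2) - (b 0 - b 2)) * (p 0 - q 2) from by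
      simp only [eschN, ht0, ht1]
      linear_combination (b 2 - a 0) * hpq + (-q 2 + p 0) * hab]
    exact hO2
  · rw [show eschN p q a b τ = ((p 0 - q 2) - (q 0 - q 2)) * (a 1 - b 2) - ((a 0 - b 2) - (b 0 - b 2)) * (p 1 - q 2) from by
      simp only [eschN, ht0, ht1]
      ring]
    exact hO0

lemma keyA (p q a b : Fin 3 → ℤ)
    (hpq : p 0 + p 1 + p 2 = q 0 + q 1 + q 2)
    (hab : a 0 + a 1 + a 2 = b 0 + b 1 + b 2)
    (i j : Fin 3) (hij : i ≠ j) (W1 W2 : ℝ)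
    (HPi : ∀ r : Fin 3, 0 < W1 * ((p r : ℝ) - (q i : ℝ)) + W2 * ((a r : ℝ) - (b i : ℝ)))
    (HPj : ∀ r : Fin 3, 0 < W1 * ((p r : ℝ) - (q j : ℝ)) + W2 * ((a r : ℝ) - (b j : ℝ)))
    (h1 : ∀ σ : Equiv.Perm (Fin 3), Equiv.Perm.sign σ = 1 → |eschN p q a b σ| = 1) :
    ∀ τ : Equiv.Perm (Fin 3), Equiv.Perm.sign τ = -1 → |eschN p q a b τ| ≤ 1 := by
  fin_cases i <;> fin_cases j <;>
    first
      | exact absurd rfl hij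
      | exact branch01 p q a b hpq hab W1 W2 HPi HPj h1
      | exact branch01 p q a b hpq hab W1 W2 HPj HPi h1
      | exact branch12 p q a b hpq hab W1 W2 HPi HPj h1
      | exact branch12 p q a b hpq hab W1 W2 HPj HPi h1
      | exact branch20 p q a b hpq hab W1 W2 HPi HPj h1
      | exact branch20 p q a b hpq hab W1 W2 HPj HPi h1

lemma keyB (p q a b : Fin 3 → ℤ)
    (hpq : p 0 + p 1 + p 2 = q 0 + q 1 + q 2)
    (hab : a 0 + a 1 + a 2 = b 0 + b 1 + b 2)
    (i j : Fin 3) (hij : i ≠ j) (W1 W2 : ℝ)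
    (HPi : ∀ r : Fin 3, 0 < W1 * ((p r : ℝ) - (q i : ℝ)) + W2 * ((a r : ℝ) - (b i : ℝ)))
    (HPj : ∀ r : Fin 3, 0 < W1 * ((p r : ℝ) - (q j : ℝ)) + W2 * ((a r : ℝ) - (b j : ℝ)))
    (h1 : ∀ σ : Equiv.Perm (Fin 3), Equiv.Perm.sign σ = -1 → |eschN p q a b σ| = 1) :
    ∀ τ : Equiv.Perm (Fin 3), Equiv.Perm.sign τ = 1 → |eschN p q a b τ| ≤ 1 := by
  have hsum : ∀ f : Fin 3 → ℤ,
      f (Equiv.swap i j 0) + f (Equiv.swap i j 1) + f (Equiv.swap i j 2) = f 0 + f 1 + f 2 := by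
    intro f
    have h := Equiv.sum_comp (Equiv.swap i j) f
    simpa [Fin.sum_univ_three] using h
  have hmul : ∀ σ : Equiv.Perm (Fin 3),
      eschN p (fun x => q (Equiv.swap i j x)) a (fun x => b (Equiv.swap i j x)) σ
        = eschN p q a b (Equiv.swap i j * σ) := by
    intro σ
    simp [eschN, Equiv.Perm.mul_apply]
  have hsign : Equiv.Perm.sign (Equiv.swap i j) = -1 := Equiv.Perm.sign_swap hij
  have key := keyA p (fun x => q (Equiv.swap i j x)) a (fun x => b (Equiv.swap i j x))
    (by rw [hsum q]; exact hpq) (by rw [hsum b]; exact hab) i j hij W1 W2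
    (by intro r; simpa [Equiv.swap_apply_left] using HPj r)
    (by intro r; simpa [Equiv.swap_apply_right] using HPi r)
    (by
      intro σ hσ
      rw [hmul σ]
      exact h1 (Equiv.swap i j * σ) (by rw [map_mul, hsign, hσ, mul_one]))
  intro τ hτ
  have h2 := key (Equiv.swap i j * τ) (by rw [map_mul, hsign, hτ, mul_one])
  rw [hmul (Equiv.swap i j * τ), ← mul_assoc, Equiv.swap_mul_self, one_mul] at h2
  exact h2

/-- **Theorem A, part (1), in arithmetic form.** For an effective, almost free, positively
curved Eschenburg orbifold with nonempty singular set, the singular set contains a vertex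
of each parity: there is an even permutation and an odd permutation whose isotropy orders
exceed `1`. -/
theorem singular_set_contains_both_parities
    (p q a b : Fin 3 → ℤ)
    (hpq : p 0 + p 1 + p 2 = q 0 + q 1 + q 2)
    (hab : a 0 + a 1 + a 2 = b 0 + b 1 + b 2)
    (hfree : ∀ σ : Equiv.Perm (Fin 3), eschN p q a b σ ≠ 0)
    (heff : eschMinorGcd p q a b = 1)
    (hpos : ∃ i j : Fin 3, i ≠ j ∧
      Disjoint (segment ℝ (eschPt (q i) (b i)) (eschPt (q j) (b j)))
        (convexHull ℝ (Set.range fun i => eschPt (p i) (a i))))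
    (hsing : ∃ σ : Equiv.Perm (Fin 3), 1 < |eschN p q a b σ|) :
    (∃ σ : Equiv.Perm (Fin 3), Equiv.Perm.sign σ = 1 ∧ 1 < |eschN p q a b σ|) ∧
      ∃ τ : Equiv.Perm (Fin 3), Equiv.Perm.sign τ = -1 ∧ 1 < |eschN p q a b τ| := by
  obtain ⟨i, j, hij, hdisj⟩ := hpos
  obtain ⟨f, u, v, hfu, huv, hfv⟩ :=
    geometric_hahn_banach_compact_closed
      (convex_segment (eschPt (q i) (b i)) (eschPt (q j) (b j)))
      (by
        rw [← convexHull_pair]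
        exact ((Set.finite_singleton _).insert _).isCompact_convexHull (𝕜 := ℝ))
      (convex_convexHull ℝ _)
      ((Set.finite_range _).isClosed_convexHull (𝕜 := ℝ))
      hdisj
  set W1 : ℝ := f (eschPt 1 0) with hW1
  set W2 : ℝ := f (eschPt 0 1) with hW2
  have feval : ∀ x y : ℤ, f (eschPt x y) = W1 * (x : ℝ) + W2 * (y : ℝ) := by
    intro x y
    have hxy : eschPt x y = (x : ℝ) • eschPt 1 0 + (y : ℝ) • eschPt 0 1 := by
      ext k; fin_cases k <;> simp [eschPt]
    rw [hxy, map_add, map_smul, map_smul, smul_eq_mul, smul_eq_mul, hW1, hW2]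
    ring
  have HP : ∀ c : Fin 3, c = i ∨ c = j →
      ∀ r : Fin 3, 0 < W1 * ((p r : ℝ) - (q c : ℝ)) + W2 * ((a r : ℝ) - (b c : ℝ)) := by
    intro c hc r
    have h2 : v < f (eschPt (p r) (a r)) :=
      hfv _ (subset_convexHull ℝ _ ⟨r, rfl⟩)
    have h1 : f (eschPt (q c) (b c)) < u := by
      rcases hc with rfl | rfl
      · exact hfu _ (left_mem_segment ℝ _ _)
      · exact hfu _ (right_mem_segment ℝ _ _)
    rw [feval] at h1 h2
    nlinarith [h1, h2, huv]
  have HPi := HP i (Or.inl rfl)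
  have HPj := HP j (Or.inr rfl)
  obtain ⟨σ₀, hσ₀⟩ := hsing
  have hsgn := Int.units_eq_one_or (Equiv.Perm.sign σ₀)
  constructor
  · by_contra hno
    push_neg at hno
    have h1 : ∀ σ : Equiv.Perm (Fin 3), Equiv.Perm.sign σ = 1 → |eschN p q a b σ| = 1 :=
      fun σ hσ => le_antisymm (hno σ hσ) (Int.one_le_abs (hfree σ))
    have hodd := keyA p q a b hpq hab i j hij W1 W2 HPi HPj h1
    rcases hsgn with h | h
    · have := hno σ₀ h; omega
    · have := hodd σ₀ h; omega
  · by_contra hno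
    push_neg at hno
    have h1 : ∀ σ : Equiv.Perm (Fin 3), Equiv.Perm.sign σ = -1 → |eschN p q a b σ| = 1 :=
      fun σ hσ => le_antisymm (hno σ hσ) (Int.one_le_abs (hfree σ))
    have heven := keyB p q a b hpq hab i j hij W1 W2 HPi HPj h1
    rcases hsgn with h | h
    · have := heven σ₀ h; omega
    · have := hno σ₀ h; omega
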